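/- Let Γ be a non-elementary geometrically finite Kleinian group with Patterson–Sullivan density {ν_x}. For any Borel subset E ⊂ S², one has ∫_{k ∈ K/M} 𝔯_E(k⁻¹ g₀) dν_{p₀}(k X₀⁻) = ν_o(E). -/

import Mathlib

/-!
Common setup: the Poincaré ball model of hyperbolic 3-space, its boundary sphere,
the group of orientation preserving isometries, circles on the sphere, Kleinian
groups, Patterson–Sullivan densities, Bowen–Margulis–Sullivan and Burger–Roblin
measures, skinning measures, etc.
-/

noncomputable section

open Set MeasureTheory Filter Topology Pointwise RealInnerProductSpace
open scoped ENNReal NNReal Classical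

namespace CirclesOnSphere

/-- Euclidean 3-space. -/
abbrev E3 : Type := EuclideanSpace ℝ (Fin 3)

/-- The closed unit ball. -/
abbrev ClosedBall : Type := {x : E3 // ‖x‖ ≤ 1}

/-- The open unit ball `𝔹`, the Poincaré ball model of hyperbolic 3-space. -/
abbrev Ball : Type := {x : E3 // ‖x‖ < 1}

/-- The unit sphere `S²`, the geometric boundary of `𝔹`. -/
abbrev Sph : Type := {x : E3 // ‖x‖ = 1}

/-- The origin `o = (0,0,0)` of the ball. -/
def ballO : Ball := ⟨0, by norm_num⟩

/-- Inverse hyperbolic cosine. -/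
def arcoshR (z : ℝ) : ℝ := Real.log (z + Real.sqrt (z ^ 2 - 1))

/-- The hyperbolic distance of the Poincaré ball model (of constant curvature `-1`,
i.e. of the metric `2√(dx₁²+dx₂²+dx₃²)/(1-|x|²)`), expressed by the standard
explicit formula; the formula is relevant for `‖x‖ < 1` and `‖y‖ < 1`. -/
def hdist (x y : E3) : ℝ :=
  arcoshR (1 + 2 * ‖x - y‖ ^ 2 / ((1 - ‖x‖ ^ 2) * (1 - ‖y‖ ^ 2)))

/-- The Busemann function `β_ξ(x,y) = lim_{t→∞} (d(x,ξ_t) - d(y,ξ_t))` for a geodesic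
ray `ξ_t` tending to `ξ ∈ S²`, given by its closed formula in the ball model. -/
def busemann (ξ : Sph) (x y : Ball) : ℝ :=
  Real.log ((‖ξ.1 - x.1‖ ^ 2 / (1 - ‖x.1‖ ^ 2)) * ((1 - ‖y.1‖ ^ 2) / ‖ξ.1 - y.1‖ ^ 2))

/-- Inclusion of the sphere into the closed ball. -/
def sphInc (ξ : Sph) : ClosedBall := ⟨ξ.1, le_of_eq ξ.2⟩

/-- Boundary restriction of a self-map of the closed ball (junk value if the
boundary is not preserved). -/
def sphRestrict (f : Equiv.Perm ClosedBall) (ξ : Sph) : Sph :=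
  if h : ‖(f (sphInc ξ)).1‖ = 1 then ⟨(f (sphInc ξ)).1, h⟩ else ξ

/-- A self-homeomorphism of the closed ball is orientation preserving (as far as these
statements are concerned) iff its boundary restriction is homotopic to the identity of `S²`,
i.e. has degree `+1`. -/
def OrientationPreservingBdry (f : Equiv.Perm ClosedBall) : Prop :=
  ∃ F : C(Sph, Sph), (∀ ξ, F ξ = sphRestrict f ξ) ∧
    F.Homotopic (ContinuousMap.id Sph)

/-- An orientation preserving isometry of the Poincaré ball `𝔹`, viewed as a
homeomorphism of the closed ball preserving the open ball and the hyperbolic metric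
on it, whose boundary map has degree `+1`. -/
def IsOPIsometry (f : Equiv.Perm ClosedBall) : Prop :=
  Continuous f ∧ Continuous f.symm ∧
  (∀ x : ClosedBall, ‖x.1‖ < 1 ↔ ‖(f x).1‖ < 1) ∧
  (∀ x y : ClosedBall, ‖x.1‖ < 1 → ‖y.1‖ < 1 →
     hdist (f x).1 (f y).1 = hdist x.1 y.1) ∧
  OrientationPreservingBdry f

lemma normOne {f : Equiv.Perm ClosedBall}
    (hf3 : ∀ x : ClosedBall, ‖x.1‖ < 1 ↔ ‖(f x).1‖ < 1) (ξ : Sph) :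
    ‖(f (sphInc ξ)).1‖ = 1 := by
  refine le_antisymm (f (sphInc ξ)).2 (not_lt.mp fun hc => ?_)
  have h2 := (hf3 (sphInc ξ)).mpr hc
  have h3 : ‖ξ.1‖ < 1 := h2
  rw [ξ.2] at h3
  exact lt_irrefl 1 h3

lemma sphRestrict_eq {f : Equiv.Perm ClosedBall}
    (hf3 : ∀ x : ClosedBall, ‖x.1‖ < 1 ↔ ‖(f x).1‖ < 1) (ξ : Sph) :
    sphRestrict f ξ = ⟨(f (sphInc ξ)).1, normOne hf3 ξ⟩ := dif_pos (normOne hf3 ξ)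

lemma sphInc_sphRestrict {f : Equiv.Perm ClosedBall}
    (hf3 : ∀ x : ClosedBall, ‖x.1‖ < 1 ↔ ‖(f x).1‖ < 1) (ξ : Sph) :
    sphInc (sphRestrict f ξ) = f (sphInc ξ) := by
  rw [sphRestrict_eq hf3 ξ]; exact Subtype.ext rfl

lemma IsOPIsometry.mul {f g : Equiv.Perm ClosedBall} (hf : IsOPIsometry f)
    (hg : IsOPIsometry g) : IsOPIsometry (f * g) := by
  obtain ⟨Ff, hFf, htpf⟩ := hf.2.2.2.2
  obtain ⟨Fg, hFg, htpg⟩ := hg.2.2.2.2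
  have hmul3 : ∀ x : ClosedBall, ‖x.1‖ < 1 ↔ ‖((f * g) x).1‖ < 1 :=
    fun x => (hg.2.2.1 x).trans (hf.2.2.1 (g x))
  refine ⟨hf.1.comp hg.1, hg.2.1.comp hf.2.1, hmul3,
    fun x y hx hy => ?_,
    ⟨Ff.comp Fg, fun ξ => ?_, ?_⟩⟩
  · show hdist (f (g x)).1 (f (g y)).1 = hdist x.1 y.1
    rw [hf.2.2.2.1 (g x) (g y) ((hg.2.2.1 x).mp hx) ((hg.2.2.1 y).mp hy)]
    exact hg.2.2.2.1 x y hx hy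
  · show Ff (Fg ξ) = sphRestrict (f * g) ξ
    rw [hFf, hFg, sphRestrict_eq hmul3 ξ, sphRestrict_eq hf.2.2.1]
    exact Subtype.ext (congrArg (fun z => (f z).1) (sphInc_sphRestrict hg.2.2.1 ξ))
  · have := ContinuousMap.Homotopic.comp htpf htpg
    simpa using this

lemma IsOPIsometry.inv {f : Equiv.Perm ClosedBall} (hf : IsOPIsometry f) :
    IsOPIsometry f⁻¹ := by
  obtain ⟨Ff, hFf, htpf⟩ := hf.2.2.2.2
  have hi3 : ∀ x : ClosedBall, ‖x.1‖ < 1 ↔ ‖(f⁻¹ x).1‖ < 1 := by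
    intro x
    have h := hf.2.2.1 (f.symm x)
    rw [Equiv.apply_symm_apply] at h
    exact h.symm
  have hcontinv : Continuous (f.symm : ClosedBall → ClosedBall) := hf.2.1
  let Finv : C(Sph, Sph) :=
    ⟨fun ξ => ⟨(f.symm (sphInc ξ)).1, normOne hi3 ξ⟩, by
      refine Continuous.subtype_mk ?_ _
      exact continuous_subtype_val.comp (hcontinv.comp
        (Continuous.subtype_mk continuous_subtype_val _))⟩
  refine ⟨hf.2.1, by simpa [Equiv.Perm.inv_def] using hf.1, hi3, fun x y hx hy => ?_, ⟨Finv, fun ξ => ?_, ?_⟩⟩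
  · have h := hf.2.2.2.1 (f.symm x) (f.symm y) ((hi3 x).mp hx) ((hi3 y).mp hy)
    rw [Equiv.apply_symm_apply, Equiv.apply_symm_apply] at h
    exact h.symm
  · rw [sphRestrict_eq hi3 ξ]; exact Subtype.ext rfl
  · -- Finv ∘ Ff = id, hence Finv ≃ id
    have hcomp : Finv.comp Ff = ContinuousMap.id Sph := by
      apply ContinuousMap.ext; intro ξ
      apply Subtype.ext
      show (f.symm (sphInc (Ff ξ))).1 = ξ.1
      rw [hFf, sphInc_sphRestrict hf.2.2.1, Equiv.symm_apply_apply]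
      rfl
    have h1 : (Finv.comp Ff).Homotopic (Finv.comp (ContinuousMap.id Sph)) :=
      ContinuousMap.Homotopic.comp (ContinuousMap.Homotopic.refl Finv) htpf
    rw [hcomp, ContinuousMap.comp_id] at h1
    exact h1.symm

lemma IsOPIsometry.one : IsOPIsometry 1 := by
  refine ⟨by simpa using continuous_id, by simpa [Equiv.Perm.one_def] using continuous_id,
    fun x => Iff.rfl, fun x y _ _ => rfl,
    ⟨ContinuousMap.id Sph, fun ξ => ?_, ContinuousMap.Homotopic.refl _⟩⟩
  have h : ‖((1 : Equiv.Perm ClosedBall) (sphInc ξ)).1‖ = 1 := ξ.2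
  simp only [sphRestrict, dif_pos h]
  exact Subtype.ext rfl

/-- The group `G` of orientation preserving isometries of `𝔹`. -/
def Gisom : Subgroup (Equiv.Perm ClosedBall) where
  carrier := {f | IsOPIsometry f}
  one_mem' := IsOPIsometry.one
  mul_mem' := fun hf hg => IsOPIsometry.mul hf hg
  inv_mem' := fun hf => IsOPIsometry.inv hf

/-- The group of orientation preserving isometries of hyperbolic 3-space. -/
abbrev G : Type := ↥Gisom

lemma mem_Gisom {f : Equiv.Perm ClosedBall} : f ∈ Gisom ↔ IsOPIsometry f := Iff.rfl

lemma GtoOP (g : G) : IsOPIsometry (g : Equiv.Perm ClosedBall) := g.2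

instance : SMul G ClosedBall := ⟨fun g x => (g : Equiv.Perm ClosedBall) x⟩

instance : MulAction G ClosedBall where
  one_smul _ := rfl
  mul_smul _ _ _ := rfl

instance : SMul G Ball :=
  ⟨fun g x => ⟨((g : Equiv.Perm ClosedBall) ⟨x.1, le_of_lt x.2⟩).1,
    ((GtoOP g).2.2.1 ⟨x.1, le_of_lt x.2⟩).mp x.2⟩⟩

instance : MulAction G Ball where
  one_smul _ := Subtype.ext rfl
  mul_smul _ _ _ := Subtype.ext rfl

instance : SMul G Sph :=
  ⟨fun g ξ => ⟨((g : Equiv.Perm ClosedBall) (sphInc ξ)).1, by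
    refine le_antisymm ((g : Equiv.Perm ClosedBall) (sphInc ξ)).2 (not_lt.mp fun hc => ?_)
    have h2 := ((GtoOP g).2.2.1 (sphInc ξ)).mpr hc
    have h3 : ‖ξ.1‖ < 1 := h2
    rw [ξ.2] at h3
    exact lt_irrefl 1 h3⟩⟩

instance : MulAction G Sph where
  one_smul _ := Subtype.ext rfl
  mul_smul _ _ _ := Subtype.ext rfl

/-- The topology on `G` (uniform/pointwise convergence together with inverses). -/
instance : TopologicalSpace G :=
  TopologicalSpace.induced
    (fun g : G => ((fun x : ClosedBall => g • x), (fun x : ClosedBall => g⁻¹ • x)))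
    inferInstance

instance : MeasurableSpace G := borel G

/-! ### Circles on the sphere -/

/-- The circle on `S²` cut out by the plane `⟪v,·⟫ = c`. -/
def circleSet (v : E3) (c : ℝ) : Set Sph := {ξ | (inner ℝ v ξ.1 : ℝ) = c}

/-- A circle on the sphere `S²`. -/
def IsCircle (C : Set Sph) : Prop :=
  ∃ v c, ‖v‖ = 1 ∧ |c| < 1 ∧ C = circleSet v c

/-- The convex hull `Ĉ ⊆ 𝔹` of a circle `C ⊆ S²`: the totally geodesic hyperbolic
plane with boundary `C` (in the ball model, the sphere orthogonal to `S²` through `C`). -/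
def hullOf (C : Set Sph) : Set Ball :=
  {p | ∃ v c, ‖v‖ = 1 ∧ |c| < 1 ∧ C = circleSet v c ∧
        c * (‖p.1‖ ^ 2 + 1) = 2 * (inner ℝ v p.1 : ℝ)}

/-- The spherical radius `θ(C) ∈ (0, π/2]`: half of the visual angle of `C` from
the origin. -/
def sphRadius (C : Set Sph) : ℝ :=
  sSup {r | ∃ v c, ‖v‖ = 1 ∧ |c| < 1 ∧ C = circleSet v c ∧ r = Real.arccos |c|}

/-- The spherical curvature `Curv_S(C) = cot θ(C)` of a circle `C ⊆ S²`. -/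
def sphCurv (C : Set Sph) : ℝ :=
  sSup {r | ∃ v c, ‖v‖ = 1 ∧ |c| < 1 ∧ C = circleSet v c ∧ r = |c| / Real.sqrt (1 - c ^ 2)}

/-- `D` is an open disk enclosed by the circle `C`. -/
def IsEnclosedDisk (C D : Set Sph) : Prop :=
  ∃ v c, ‖v‖ = 1 ∧ |c| < 1 ∧ C = circleSet v c ∧ D = {ξ : Sph | c < (inner ℝ v ξ.1 : ℝ)}

/-- The hyperbolic distance `d(Ĉ, x)` from a point `x ∈ 𝔹` to the convex hull of `C`. -/
def hullDist (C : Set Sph) (x : Ball) : ℝ :=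
  sInf {r | ∃ p ∈ hullOf C, r = hdist p.1 x.1}

/-! ### Kleinian groups -/

/-- Discreteness of a subgroup of `G`, expressed through proper discontinuity of its
action on `𝔹`. -/
def IsDiscrete (Γ : Subgroup G) : Prop :=
  ∀ (x : Ball) (r : ℝ), {γ : G | γ ∈ Γ ∧ hdist ((γ • x : Ball)).1 x.1 ≤ r}.Finite

/-- Torsion-freeness. -/
def IsTorsionFreeSubgroup (Γ : Subgroup G) : Prop :=
  ∀ γ ∈ Γ, γ ≠ 1 → ∀ n : ℕ, 0 < n → γ ^ n ≠ 1

/-- A Kleinian group: a torsion-free discrete subgroup of `G`. -/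
def IsKleinian (Γ : Subgroup G) : Prop := IsTorsionFreeSubgroup Γ ∧ IsDiscrete Γ

/-- `Γ` is non-elementary: it has no abelian subgroup of finite index. -/
def NonElementary (Γ : Subgroup G) : Prop :=
  ¬ ∃ Λ : Subgroup G, Λ ≤ Γ ∧ (Λ.subgroupOf Γ).FiniteIndex ∧
      ∀ a ∈ Λ, ∀ b ∈ Λ, a * b = b * a

/-- The limit set `Λ(Γ) ⊆ S²`: the set of accumulation points of a `Γ`-orbit in
`𝔹 ∪ S²`. -/
def limitSet (Γ : Subgroup G) : Set Sph :=
  {ξ | ξ.1 ∈ closure (Set.range fun γ : ↥Γ => (((γ : G) • ballO : Ball)).1)}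

/-- The domain of discontinuity `Ω(Γ) = S² ∖ Λ(Γ)`. -/
def domOfDisc (Γ : Subgroup G) : Set Sph := (limitSet Γ)ᶜ

/-- The critical exponent `δ_Γ`, the abscissa of convergence of the Poincaré series. -/
def critExp (Γ : Subgroup G) : ℝ :=
  sInf {s : ℝ | Summable fun γ : ↥Γ =>
    Real.exp (-s * hdist (((γ : G) • ballO : Ball)).1 (ballO : Ball).1)}

/-- A (hyperbolic) half-space of `𝔹`, bounded by a totally geodesic plane. -/
def halfSpaceB (v : E3) (c : ℝ) : Set Ball :=
  {p | c * (‖p.1‖ ^ 2 + 1) ≤ 2 * (inner ℝ v p.1 : ℝ)}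

/-- A fundamental domain for `Γ` in `𝔹`. -/
def IsFundDomBall (Γ : Subgroup G) (D : Set Ball) : Prop :=
  (∀ x : Ball, ∃ γ ∈ Γ, γ • x ∈ D) ∧
  ∀ γ ∈ Γ, γ ≠ 1 → Disjoint (interior D) ((γ • ·) '' interior D)

/-- Geometric finiteness: `Γ` admits a finite sided (polyhedral) fundamental domain
in `𝔹`. -/
def GeometricallyFinite (Γ : Subgroup G) : Prop :=
  ∃ (s : Finset (E3 × ℝ)) (D : Set Ball),
    D = ⋂ q ∈ s, halfSpaceB q.1 q.2 ∧ IsFundDomBall Γ D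

/-- The geodesic line in `𝔹` with endpoints `ξ ≠ η` on `S²` (via the Gromov product
characterization in the ball model). -/
def geodLine (ξ η : Sph) : Set Ball :=
  {z | busemann ξ z ballO + busemann η z ballO = 2 * Real.log (2 / ‖ξ.1 - η.1‖)}

/-- Hyperbolic convexity of a subset of `𝔹`. -/
def IsHypConvex (S : Set Ball) : Prop :=
  ∀ x ∈ S, ∀ y ∈ S, ∀ z : Ball,
    hdist x.1 z.1 + hdist z.1 y.1 = hdist x.1 y.1 → z ∈ S

/-- The convex hull in `𝔹` of the limit set: the minimal convex set containing all
geodesics connecting any two points of `Λ(Γ)`. -/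
def convexCoreSet (Γ : Subgroup G) : Set Ball :=
  ⋂₀ {S | IsHypConvex S ∧
      (⋃ ξ ∈ limitSet Γ, ⋃ η ∈ limitSet Γ, geodLine ξ η) ⊆ S}

/-- The quotient `Γ\𝔹`. -/
abbrev ballQuot (Γ : Subgroup G) : Type := Quotient (MulAction.orbitRel ↥Γ Ball)

/-- `Γ` is convex cocompact: the convex core (the image of the convex hull of the
limit set in `Γ\𝔹`) is compact. -/
def IsConvexCocompact (Γ : Subgroup G) : Prop :=
  IsCompact ((fun x : Ball => (Quotient.mk (MulAction.orbitRel ↥Γ Ball) x : ballQuot Γ)) ''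
    convexCoreSet Γ)

/-- `g ∈ G` is parabolic iff it has a unique fixed point on `S²`. -/
def IsParabolic (g : G) : Prop := ∃! ξ : Sph, g • ξ = ξ

/-- `H = Stab_G(Ĉ)`, the stabilizer in `G` of the convex hull of the circle `C`. -/
def stabH (C : Set Sph) : Subgroup G := MulAction.stabilizer G (hullOf C)

/-- The stabilizer in `G` of a subset of the sphere. -/
def stabCircle (C : Set Sph) : Subgroup G := MulAction.stabilizer G C

/-- `K = Stab_G(p₀)`. -/
def Kstab (p : Ball) : Subgroup G := MulAction.stabilizer G p

/-! ### Circle packings and counting -/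

/-- The orbit `Γ(C)` of a circle. -/
def orbitOfCircle (Γ : Subgroup G) (C : Set Sph) : Set (Set Sph) := {D | ∃ γ ∈ Γ, D = γ • C}

/-- Local finiteness of a circle packing: for every `T > 1` there are only finitely
many circles of spherical curvature at most `T`. -/
def LocallyFinitePacking (P : Set (Set Sph)) : Prop :=
  ∀ T : ℝ, 1 < T → {C | C ∈ P ∧ sphCurv C ≤ T}.Finite

/-- `N_T(P, E)`: the number of circles of `P` meeting `E` of spherical curvature
less than `T`. -/
def NcurvCount (P : Set (Set Sph)) (Es : Set Sph) (T : ℝ) : ℕ :=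
  Set.ncard {C | C ∈ P ∧ (C ∩ Es).Nonempty ∧ sphCurv C < T}

/-- `#{C ∈ P : C ∩ E ≠ ∅, d(Ĉ, o) < T}`. -/
def NdistCount (P : Set (Set Sph)) (Es : Set Sph) (o : Ball) (T : ℝ) : ℕ :=
  Set.ncard {C | C ∈ P ∧ (C ∩ Es).Nonempty ∧ hullDist C o < T}

/-- `#{C ∈ P : d(Ĉ, o) < T}`. -/
def NdistAll (P : Set (Set Sph)) (o : Ball) (T : ℝ) : ℕ :=
  Set.ncard {C | C ∈ P ∧ hullDist C o < T}

/-! ### Conformal densities and the associated measures -/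

/-- The Patterson–Sullivan density for `Γ`: a `Γ`-invariant conformal density of
dimension `δ_Γ` supported on the limit set. -/
def IsPSDensity (Γ : Subgroup G) (ν : Ball → Measure Sph) : Prop :=
  (∀ x, ν x ≠ 0) ∧ (∀ x, IsFiniteMeasure (ν x)) ∧
  (∀ x, ν x (limitSet Γ)ᶜ = 0) ∧
  (∀ γ ∈ Γ, ∀ x : Ball, Measure.map (fun ξ => γ • ξ) (ν x) = ν (γ • x)) ∧
  (∀ x y : Ball, ν y = (ν x).withDensity fun ξ =>
      ENNReal.ofReal (Real.exp (-(critExp Γ) * busemann ξ y x)))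

/-- A `G`-invariant conformal density `{m_x}` of dimension `2` on `S²`. -/
def IsConfDensity2 (m : Ball → Measure Sph) : Prop :=
  (∀ x, m x ≠ 0) ∧ (∀ x, IsFiniteMeasure (m x)) ∧
  (∀ g : G, ∀ x : Ball, Measure.map (fun ξ => g • ξ) (m x) = m (g • x)) ∧
  (∀ x y : Ball, m y = (m x).withDensity fun ξ =>
      ENNReal.ofReal (Real.exp (-2 * busemann ξ y x)))

/-- The unit tangent bundle `T¹(𝔹)`, in the coordinates
`u ↦ (u⁺, u⁻, s = β_{u⁻}(π(u), o))`. -/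
abbrev T1 : Type := (Sph × Sph) × ℝ

/-- The (lifted) Bowen–Margulis–Sullivan measure
`dm̃^BMS(u) = e^{δ β_{u⁺}(x,π(u))} e^{δ β_{u⁻}(x,π(u))} dν_x(u⁺) dν_x(u⁻) dt`
on `T¹(𝔹)`, expressed in the coordinates above with `x = o` (the density is then
`(2/|u⁺-u⁻|)^{2δ}`, twice the `δ`-th power of the exponentiated Gromov product). -/
def tildeBMS (ν : Measure Sph) (δ : ℝ) : Measure T1 :=
  ((ν.prod ν).prod volume).withDensity fun u =>
    ENNReal.ofReal ((2 / ‖u.1.1.1 - u.1.2.1‖) ^ (2 * δ))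

/-- The (lifted) Burger–Roblin measure
`dm̃^BR(u) = e^{2 β_{u⁺}(x,π(u))} e^{δ β_{u⁻}(x,π(u))} dm_x(u⁺) dν_x(u⁻) dt`
on `T¹(𝔹)`, in the same coordinates with `x = o`. -/
def tildeBR (m ν : Measure Sph) (δ : ℝ) : Measure T1 :=
  ((m.prod ν).prod volume).withDensity fun u =>
    ENNReal.ofReal ((2 / ‖u.1.1.1 - u.1.2.1‖) ^ (4 : ℝ) * Real.exp ((2 - δ) * u.2))

/-- The `G`-action on `T¹(𝔹)` in the above coordinates. -/
def smulT1 (γ : G) (u : T1) : T1 :=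
  ((γ • u.1.1, γ • u.1.2), u.2 + busemann u.1.2 ballO (γ⁻¹ • ballO))

/-- A (Borel, strict) fundamental domain for the `Γ`-action on `T¹(𝔹)`;
integrating over it realizes measures on `T¹(Γ\𝔹)`. -/
def IsFundDomT1 (Γ : Subgroup G) (F : Set T1) : Prop :=
  MeasurableSet F ∧ (∀ u : T1, ∃ γ ∈ Γ, smulT1 γ u ∈ F) ∧
  ∀ γ ∈ Γ, γ ≠ 1 → Disjoint F (smulT1 γ '' F)

/-- For a unit normal vector `s` to `Ĉ` with `s⁺ = ξ`, the quantity
`β_{s⁺}(x, π(s)) = sup_{p ∈ Ĉ} β_ξ(x, p)` (the sup is attained at the foot `π(s)`). -/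
def footSup (C : Set Sph) (x : Ball) (ξ : Sph) : ℝ :=
  sSup {r | ∃ p ∈ hullOf C, r = busemann ξ x p}

/-- The density `e^{d·β_{s⁺}(x,π(s))}` on `C† ≅ S² ∖ C` (via `s ↦ s⁺`). -/
def normalDensity (d : ℝ) (C : Set Sph) (x : Ball) (ξ : Sph) : ℝ :=
  Real.exp (d * footSup C x ξ)

/-- A (Borel, strict) fundamental domain `F ⊆ W` for the `Λ`-action on `W ⊆ S²`. -/
def IsFundDomSph (Λ : Subgroup G) (W F : Set Sph) : Prop :=
  MeasurableSet F ∧ F ⊆ W ∧ (∀ ξ ∈ W, ∃ γ ∈ Λ, γ • ξ ∈ F) ∧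
  ∀ γ ∈ Λ, γ ≠ 1 → Disjoint F ((γ • ·) '' F)

/-- The skinning mass `∫_{Stab_Γ(C†)\C†} e^{d β_{s⁺}(x,π(s))} dν_x(s⁺)` of one circle,
realized as an integral over a fundamental domain `F ⊆ S² ∖ C ≅ C†`. -/
def skinMass (d : ℝ) (μ : Measure Sph) (C : Set Sph) (x : Ball) (F : Set Sph) : ℝ≥0∞ :=
  ∫⁻ ξ in F, ENNReal.ofReal (normalDensity d C x ξ) ∂μ

/-- `μ^Leb` on `C† ≅ S² ∖ C`: the measure `e^{2β_{s⁺}(x,π(s))} dm_x(s⁺)`. -/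
def muLeb (m₀ : Measure Sph) (C : Set Sph) : Measure Sph :=
  m₀.withDensity fun ξ => ENNReal.ofReal (normalDensity 2 C ballO ξ)

/-- The Burger–Roblin integral `m^BR_Γ(φ)` of a function `φ` on `Γ\G/M ≅ Γ\T¹(𝔹)`,
realized via a fundamental domain `F ⊆ T¹(𝔹)` and a section `τ : T¹(𝔹) → G`. -/
def mBRint (m ν : Measure Sph) (δ : ℝ) (F : Set T1) (τ : T1 → G) (φ : G → ℝ) : ℝ :=
  ∫ u in F, φ (τ u) ∂(tildeBR m ν δ)

/-! ### The subgroups `K`, `M`, `N` and related data -/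

/-- `M`: the centralizer of `A = {a_t}` in `K`. -/
def Msub (p₀ : Ball) (aOP : ℝ → G) : Subgroup G :=
  Subgroup.centralizer (Set.range aOP) ⊓ Kstab p₀

/-- `N`: the expanding horospherical subgroup `{g : a_t g a_t⁻¹ → e}` for `A⁺`. -/
def Ngrp (aOP : ℝ → G) : Set G :=
  {g | ∀ δ > (0:ℝ), ∃ T : ℝ, ∀ t ≥ T, ∀ x : ClosedBall,
    ‖(((aOP t * g * (aOP t)⁻¹) • x : ClosedBall)).1 - x.1‖ < δ}

/-- The function `𝔯_E` on `G`: `𝔯_E(a_t n k) = e^{-δ_Γ t} χ_{(g₀⁻¹E)_{p₀}}(k⁻¹)`. -/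
def frakR (Γ : Subgroup G) (p₀ : Ball) (aOP : ℝ → G) (g₀ : G) (X₀m : Sph)
    (Es : Set Sph) (g : G) : ℝ :=
  sSup {r | ∃ t n k, n ∈ Ngrp aOP ∧ k ∈ Kstab p₀ ∧ g = aOP t * n * k ∧
      r = if k⁻¹ • X₀m ∈ g₀⁻¹ • Es then Real.exp (-(critExp Γ) * t) else 0}

/-- A fixed left invariant metric on `G`, compatible with its topology. -/
structure LeftInvMetric where
  d : G → G → ℝ
  nonneg : ∀ g h, 0 ≤ d g h
  eq_iff : ∀ g h, d g h = 0 ↔ g = h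
  symm : ∀ g h, d g h = d h g
  triangle : ∀ g h k, d g k ≤ d g h + d h k
  leftInvariant : ∀ k g h, d (k * g) (k * h) = d g h
  compat : ∀ s : Set G, IsOpen s ↔ ∀ g ∈ s, ∃ ε > 0, ∀ h, d g h < ε → h ∈ s

/-- `U_ε`: the ε-ball around the identity of `G`. -/
def LeftInvMetric.ball (dm : LeftInvMetric) (ε : ℝ) : Set G := {g | dm.d 1 g < ε}

/-- `E_ε⁺ = g₀ U_ε g₀⁻¹ (E)`. -/
def Eplus (dm : LeftInvMetric) (g₀ : G) (ε : ℝ) (Es : Set Sph) : Set Sph :=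
  ⋃ u ∈ dm.ball ε, (g₀ * u * g₀⁻¹) • Es

/-- `E_ε⁻ = ∩_{u ∈ U_ε} g₀ u g₀⁻¹ (E)`. -/
def Eminus (dm : LeftInvMetric) (g₀ : G) (ε : ℝ) (Es : Set Sph) : Set Sph :=
  ⋂ u ∈ dm.ball ε, (g₀ * u * g₀⁻¹) • Es

/-- `P`-admissibility of `E ⊆ S²`: for any `C ∈ P` (with designated enclosed open
disk `C°`), `C° ∩ E ≠ ∅` implies `C° ⊆ E`, except for finitely many circles. -/
def IsAdmissible (P : Set (Set Sph)) (Es : Set Sph) : Prop :=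
  ∃ disk : Set Sph → Set Sph,
    (∀ C ∈ P, IsEnclosedDisk C (disk C)) ∧
    {C | C ∈ P ∧ (disk C ∩ Es).Nonempty ∧ ¬ disk C ⊆ Es}.Finite

/-! ### The projection `(Γ∩H)\Ĉ₀ → Γ\𝔹` -/

/-- The `(Γ ∩ H)`-orbit equivalence on `Ĉ₀`. -/
def hullSetoid (Γ : Subgroup G) (C : Set Sph) : Setoid ↥(hullOf C) where
  r p q := ∃ γ ∈ stabH C ⊓ Γ, γ • (p : Ball) = (q : Ball)
  iseqv := by
    refine ⟨fun p => ⟨1, one_mem _, one_smul _ _⟩, ?_, ?_⟩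
    · rintro p q ⟨γ, hγ, h⟩
      exact ⟨γ⁻¹, inv_mem hγ, by rw [← h, inv_smul_smul]⟩
    · rintro p q r ⟨γ, hγ, h⟩ ⟨γ', hγ', h'⟩
      exact ⟨γ' * γ, mul_mem hγ' hγ, by rw [mul_smul, h, h']⟩

/-- The natural projection `(Γ ∩ H)\Ĉ₀ → Γ\𝔹`. -/
def projHull (Γ : Subgroup G) (C : Set Sph) :
    Quotient (hullSetoid Γ C) → ballQuot Γ :=
  Quotient.lift (fun p => Quotient.mk (MulAction.orbitRel ↥Γ Ball) (p : Ball))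
    (by
      rintro p q ⟨γ, hγ, h⟩
      refine Quotient.sound ⟨⟨γ⁻¹, inv_mem hγ.2⟩, ?_⟩
      show γ⁻¹ • (q : Ball) = (p : Ball)
      rw [← h, inv_smul_smul])

/-! ### Test functions -/

/-- `ψ ∈ C_c(Γ\G/M)`: a continuous function on `G`, left `Γ`-invariant, right
`M`-invariant, compactly supported modulo `Γ`. -/
def IsCcGammaGmodM (Γ : Subgroup G) (p₀ : Ball) (aOP : ℝ → G) (ψ : G → ℝ) : Prop :=
  Continuous ψ ∧ (∀ γ ∈ Γ, ∀ g, ψ (γ * g) = ψ g) ∧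
  (∀ m ∈ Msub p₀ aOP, ∀ g, ψ (g * m) = ψ g) ∧
  ∃ κ : Set Ball, IsCompact κ ∧ ∀ g : G, ψ g ≠ 0 → ∃ γ ∈ Γ, (γ * g) • p₀ ∈ κ

/-- `ψ ∈ C_c(Γ\G)`. -/
def IsCcGammaG (Γ : Subgroup G) (p₀ : Ball) (ψ : G → ℝ) : Prop :=
  Continuous ψ ∧ (∀ γ ∈ Γ, ∀ g, ψ (γ * g) = ψ g) ∧
  ∃ κ : Set Ball, IsCompact κ ∧ ∀ g : G, ψ g ≠ 0 → ∃ γ ∈ Γ, (γ * g) • p₀ ∈ κ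

/-- `Ψ^ε(g) = Σ_{γ ∈ Γ} ψ^ε(γ g)`. -/
def PsiSum (Γ : Subgroup G) (ψ : G → ℝ) (g : G) : ℝ := ∑' γ : ↥Γ, ψ ((γ : G) * g)

/-- `Ψ^ε_E(g) = ∫_{k⁻¹ ∈ (g₀⁻¹E)_{p₀}} Ψ^ε(g k g₀⁻¹) dm_{p₀}(k)`, where `μK` is the
lift to `K` of the measure `dm_{p₀}(k) = dm_{p₀}((k X₀)⁺)`. -/
def PsiE (Γ : Subgroup G) (g₀ : G) (X₀m : Sph) (μK : Measure G) (ψ : G → ℝ)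
    (Es : Set Sph) (g : G) : ℝ :=
  ∫ k in {k : G | k⁻¹ • X₀m ∈ g₀⁻¹ • Es}, PsiSum Γ ψ (g * k * g₀⁻¹) ∂μK

/-! ### The sets `B_T(E) ⊆ H\G` and the counting functions `F_T` -/

/-- `B_T(E) = [e] K A_T⁺ (g₀⁻¹E)_{p₀}⁻¹ g₀⁻¹ ⊆ H\G`. -/
def BTset (C₀ : Set Sph) (p₀ : Ball) (aOP : ℝ → G) (g₀ : G) (X₀m : Sph)
    (Es : Set Sph) (T : ℝ) : Set (Quotient (QuotientGroup.rightRel (stabH C₀))) :=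
  {x | ∃ k₁ ∈ Kstab p₀, ∃ t, 0 ≤ t ∧ t ≤ T ∧
    ∃ k, (k ∈ Kstab p₀ ∧ k • X₀m ∈ g₀⁻¹ • Es) ∧
      x = Quotient.mk (QuotientGroup.rightRel (stabH C₀)) (k₁ * aOP t * k⁻¹ * g₀⁻¹)}

/-- `F(g) = Σ_{γ ∈ (Γ∩H)\Γ} χ_B([e] γ g)` for `B ⊆ H\G`. -/
def FTcount (Γ : Subgroup G) (C₀ : Set Sph)
    (B : Set (Quotient (QuotientGroup.rightRel (stabH C₀)))) (g : G) : ℕ :=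
  Set.ncard {x | x ∈ B ∧ ∃ γ ∈ Γ, x = Quotient.mk (QuotientGroup.rightRel (stabH C₀)) (γ * g)}

end CirclesOnSphere

namespace CirclesOnSphere


/-! ### Auxiliary lemmas for Lemma 3.2 -/

lemma one_sub_normSq_pos (x : Ball) : 0 < 1 - ‖x.1‖ ^ 2 := by
  have h := x.2
  have h0 : (0:ℝ) ≤ ‖x.1‖ := norm_nonneg _
  nlinarith

lemma sph_sub_norm_pos (ξ : Sph) (x : Ball) : 0 < ‖ξ.1 - x.1‖ := by
  rw [norm_sub_pos_iff]
  intro h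
  have h2 : ‖ξ.1‖ = ‖x.1‖ := by rw [h]
  rw [ξ.2] at h2
  exact absurd h2.symm (ne_of_lt x.2)

/-- Auxiliary log form of the Busemann function. -/
def bsL (ξ : Sph) (x : Ball) : ℝ := Real.log (‖ξ.1 - x.1‖ ^ 2) - Real.log (1 - ‖x.1‖ ^ 2)

lemma busemann_eq_bsL (ξ : Sph) (x y : Ball) : busemann ξ x y = bsL ξ x - bsL ξ y := by
  have hax : (0:ℝ) < ‖ξ.1 - x.1‖ ^ 2 := pow_pos (sph_sub_norm_pos ξ x) 2
  have hay : (0:ℝ) < ‖ξ.1 - y.1‖ ^ 2 := pow_pos (sph_sub_norm_pos ξ y) 2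
  have hbx := one_sub_normSq_pos x
  have hby := one_sub_normSq_pos y
  unfold busemann bsL
  rw [Real.log_mul (div_pos hax hbx).ne' (div_pos hby hay).ne',
    Real.log_div hax.ne' hbx.ne', Real.log_div hby.ne' hay.ne']
  ring

lemma busemann_cocycle (ξ : Sph) (x y z : Ball) :
    busemann ξ x z = busemann ξ x y + busemann ξ y z := by
  rw [busemann_eq_bsL, busemann_eq_bsL, busemann_eq_bsL]; ring

lemma busemann_antisymm (ξ : Sph) (x y : Ball) : busemann ξ x y = - busemann ξ y x := by
  rw [busemann_eq_bsL, busemann_eq_bsL]; ring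

lemma busemann_self (ξ : Sph) (x : Ball) : busemann ξ x x = 0 := by
  rw [busemann_eq_bsL]; ring

lemma hdist_smul' (g : G) (x y : Ball) :
    hdist ((g • x : Ball)).1 ((g • y : Ball)).1 = hdist x.1 y.1 :=
  (GtoOP g).2.2.2.1 ⟨x.1, x.2.le⟩ ⟨y.1, y.2.le⟩ x.2 y.2

lemma hdist_comm (x y : E3) : hdist x y = hdist y x := by
  unfold hdist
  rw [norm_sub_rev, mul_comm (1 - ‖x‖ ^ 2) (1 - ‖y‖ ^ 2)]

lemma smul_tendsto (g : G) {ι : Type*} {l : Filter ι} (z : ι → Ball) (ξ : Sph)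
    (hz : Tendsto (fun i => (z i).1) l (𝓝 ξ.1)) :
    Tendsto (fun i => ((g • z i : Ball)).1) l (𝓝 ((g • ξ : Sph)).1) := by
  have hc : Continuous ((g : Equiv.Perm ClosedBall) : ClosedBall → ClosedBall) := (GtoOP g).1
  have h1 : Tendsto (fun i => (⟨(z i).1, (z i).2.le⟩ : ClosedBall)) l (𝓝 (sphInc ξ)) :=
    tendsto_subtype_rng.mpr hz
  have h2 := (hc.tendsto (sphInc ξ)).comp h1
  exact tendsto_subtype_rng.mp h2

lemma arcoshR_div (d e : ℝ) (hd : 0 < d) (he : 0 ≤ e) :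
    arcoshR ((d + e) / d) = Real.log (d + e + Real.sqrt ((d + e) ^ 2 - d ^ 2)) - Real.log d := by
  unfold arcoshR
  have h1 : ((d + e) / d) ^ 2 - 1 = ((d + e) ^ 2 - d ^ 2) / d ^ 2 := by
    field_simp
  have hnn : (0:ℝ) ≤ (d + e) ^ 2 - d ^ 2 := by nlinarith
  have hnum : 0 < d + e + Real.sqrt ((d + e) ^ 2 - d ^ 2) := by
    have := Real.sqrt_nonneg ((d + e) ^ 2 - d ^ 2); linarith
  rw [h1, Real.sqrt_div hnn, Real.sqrt_sq hd.le, ← add_div,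
    Real.log_div hnum.ne' hd.ne']

lemma hdist_eq_log (x w : Ball) :
    hdist x.1 w.1 =
      Real.log ((1 - ‖w.1‖ ^ 2) + 2 * ‖x.1 - w.1‖ ^ 2 / (1 - ‖x.1‖ ^ 2) +
          Real.sqrt (((1 - ‖w.1‖ ^ 2) + 2 * ‖x.1 - w.1‖ ^ 2 / (1 - ‖x.1‖ ^ 2)) ^ 2
            - (1 - ‖w.1‖ ^ 2) ^ 2)) - Real.log (1 - ‖w.1‖ ^ 2) := by
  have hdpos : 0 < 1 - ‖w.1‖ ^ 2 := one_sub_normSq_pos w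
  have hxpos : 0 < 1 - ‖x.1‖ ^ 2 := one_sub_normSq_pos x
  have he : 0 ≤ 2 * ‖x.1 - w.1‖ ^ 2 / (1 - ‖x.1‖ ^ 2) := by positivity
  have hu : 1 + 2 * ‖x.1 - w.1‖ ^ 2 / ((1 - ‖x.1‖ ^ 2) * (1 - ‖w.1‖ ^ 2))
      = ((1 - ‖w.1‖ ^ 2) + 2 * ‖x.1 - w.1‖ ^ 2 / (1 - ‖x.1‖ ^ 2)) / (1 - ‖w.1‖ ^ 2) := by
    field_simp
  show arcoshR _ = _
  rw [hu]
  exact arcoshR_div _ _ hdpos he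

lemma tendsto_hdist_sub (ξ : Sph) (x y : Ball) {ι : Type*} {l : Filter ι} (z : ι → Ball)
    (hz : Tendsto (fun i => (z i).1) l (𝓝 ξ.1)) :
    Tendsto (fun i => hdist x.1 (z i).1 - hdist y.1 (z i).1) l (𝓝 (busemann ξ x y)) := by
  have hxpos : 0 < 1 - ‖x.1‖ ^ 2 := one_sub_normSq_pos x
  have hypos : 0 < 1 - ‖y.1‖ ^ 2 := one_sub_normSq_pos y
  have hax : (0:ℝ) < ‖ξ.1 - x.1‖ ^ 2 := pow_pos (sph_sub_norm_pos ξ x) 2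
  have hay : (0:ℝ) < ‖ξ.1 - y.1‖ ^ 2 := pow_pos (sph_sub_norm_pos ξ y) 2
  set cx : ℝ := 2 * ‖x.1 - ξ.1‖ ^ 2 / (1 - ‖x.1‖ ^ 2) with hcx
  set cy : ℝ := 2 * ‖y.1 - ξ.1‖ ^ 2 / (1 - ‖y.1‖ ^ 2) with hcy
  have hcxpos : 0 < cx := by
    rw [hcx]
    have h1 : (0:ℝ) < ‖x.1 - ξ.1‖ ^ 2 := by rw [norm_sub_rev]; exact hax
    exact div_pos (by nlinarith) hxpos
  have hcypos : 0 < cy := by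
    rw [hcy]
    have h1 : (0:ℝ) < ‖y.1 - ξ.1‖ ^ 2 := by rw [norm_sub_rev]; exact hay
    exact div_pos (by nlinarith) hypos
  have hcont1 : Tendsto (fun i => 1 - ‖(z i).1‖ ^ 2) l (𝓝 0) := by
    have hc : Tendsto (fun v : E3 => 1 - ‖v‖ ^ 2) (𝓝 ξ.1) (𝓝 (1 - ‖ξ.1‖ ^ 2)) :=
      (continuous_const.sub (continuous_norm.pow 2)).tendsto _
    have h := hc.comp hz
    rw [ξ.2] at h
    simpa [Function.comp_def] using h
  have hvx : Tendsto (fun i => (1 - ‖(z i).1‖ ^ 2) + 2 * ‖x.1 - (z i).1‖ ^ 2 / (1 - ‖x.1‖ ^ 2))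
      l (𝓝 cx) := by
    have h2 : Tendsto (fun i => 2 * ‖x.1 - (z i).1‖ ^ 2 / (1 - ‖x.1‖ ^ 2)) l (𝓝 cx) := by
      have hc : Continuous (fun v : E3 => 2 * ‖x.1 - v‖ ^ 2 / (1 - ‖x.1‖ ^ 2)) :=
        (continuous_const.mul (((continuous_const.sub continuous_id).norm).pow 2)).div_const _
      exact (hc.tendsto ξ.1).comp hz
    have h := hcont1.add h2
    simpa using h
  have hvy : Tendsto (fun i => (1 - ‖(z i).1‖ ^ 2) + 2 * ‖y.1 - (z i).1‖ ^ 2 / (1 - ‖y.1‖ ^ 2))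
      l (𝓝 cy) := by
    have h2 : Tendsto (fun i => 2 * ‖y.1 - (z i).1‖ ^ 2 / (1 - ‖y.1‖ ^ 2)) l (𝓝 cy) := by
      have hc : Continuous (fun v : E3 => 2 * ‖y.1 - v‖ ^ 2 / (1 - ‖y.1‖ ^ 2)) :=
        (continuous_const.mul (((continuous_const.sub continuous_id).norm).pow 2)).div_const _
      exact (hc.tendsto ξ.1).comp hz
    have h := hcont1.add h2
    simpa using h
  have hsx : Tendsto (fun i => Real.sqrt
      (((1 - ‖(z i).1‖ ^ 2) + 2 * ‖x.1 - (z i).1‖ ^ 2 / (1 - ‖x.1‖ ^ 2)) ^ 2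
        - (1 - ‖(z i).1‖ ^ 2) ^ 2)) l (𝓝 cx) := by
    have h := (hvx.pow 2).sub (hcont1.pow 2)
    have h2 := (Real.continuous_sqrt.tendsto _).comp h
    have hval : Real.sqrt (cx ^ 2 - 0 ^ 2) = cx := by
      rw [(by ring : cx ^ 2 - (0:ℝ) ^ 2 = cx ^ 2), Real.sqrt_sq hcxpos.le]
    rw [hval] at h2
    exact h2
  have hsy : Tendsto (fun i => Real.sqrt
      (((1 - ‖(z i).1‖ ^ 2) + 2 * ‖y.1 - (z i).1‖ ^ 2 / (1 - ‖y.1‖ ^ 2)) ^ 2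
        - (1 - ‖(z i).1‖ ^ 2) ^ 2)) l (𝓝 cy) := by
    have h := (hvy.pow 2).sub (hcont1.pow 2)
    have h2 := (Real.continuous_sqrt.tendsto _).comp h
    have hval : Real.sqrt (cy ^ 2 - 0 ^ 2) = cy := by
      rw [(by ring : cy ^ 2 - (0:ℝ) ^ 2 = cy ^ 2), Real.sqrt_sq hcypos.le]
    rw [hval] at h2
    exact h2
  have hnx : Tendsto (fun i => Real.log ((1 - ‖(z i).1‖ ^ 2) + 2 * ‖x.1 - (z i).1‖ ^ 2 / (1 - ‖x.1‖ ^ 2) +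
      Real.sqrt (((1 - ‖(z i).1‖ ^ 2) + 2 * ‖x.1 - (z i).1‖ ^ 2 / (1 - ‖x.1‖ ^ 2)) ^ 2
        - (1 - ‖(z i).1‖ ^ 2) ^ 2))) l (𝓝 (Real.log (cx + cx))) :=
    ((Real.continuousAt_log (by linarith)).tendsto).comp (hvx.add hsx)
  have hny : Tendsto (fun i => Real.log ((1 - ‖(z i).1‖ ^ 2) + 2 * ‖y.1 - (z i).1‖ ^ 2 / (1 - ‖y.1‖ ^ 2) +
      Real.sqrt (((1 - ‖(z i).1‖ ^ 2) + 2 * ‖y.1 - (z i).1‖ ^ 2 / (1 - ‖y.1‖ ^ 2)) ^ 2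
        - (1 - ‖(z i).1‖ ^ 2) ^ 2))) l (𝓝 (Real.log (cy + cy))) :=
    ((Real.continuousAt_log (by linarith)).tendsto).comp (hvy.add hsy)
  have hlx : Real.log cx = Real.log 2 + Real.log (‖ξ.1 - x.1‖ ^ 2) - Real.log (1 - ‖x.1‖ ^ 2) := by
    rw [hcx, norm_sub_rev, Real.log_div (by positivity) hxpos.ne',
      Real.log_mul two_ne_zero hax.ne']
  have hly : Real.log cy = Real.log 2 + Real.log (‖ξ.1 - y.1‖ ^ 2) - Real.log (1 - ‖y.1‖ ^ 2) := by
    rw [hcy, norm_sub_rev, Real.log_div (by positivity) hypos.ne',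
      Real.log_mul two_ne_zero hay.ne']
  have hlim2 : Real.log (cx + cx) - Real.log (cy + cy) = busemann ξ x y := by
    have h2x : Real.log (cx + cx) = Real.log 2 + Real.log cx := by
      rw [(by ring : cx + cx = 2 * cx), Real.log_mul two_ne_zero hcxpos.ne']
    have h2y : Real.log (cy + cy) = Real.log 2 + Real.log cy := by
      rw [(by ring : cy + cy = 2 * cy), Real.log_mul two_ne_zero hcypos.ne']
    rw [busemann_eq_bsL]
    unfold bsL
    rw [h2x, h2y, hlx, hly]
    ring
  rw [← hlim2]
  refine (hnx.sub hny).congr fun i => ?_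
  rw [hdist_eq_log x (z i), hdist_eq_log y (z i)]
  ring

lemma busemann_smul (g : G) (ξ : Sph) (x y : Ball) :
    busemann (g • ξ) (g • x) (g • y) = busemann ξ x y := by
  have hw : ∀ n : ℕ, ‖(1 - 1/((n:ℝ)+1)) • ξ.1‖ < 1 := by
    intro n
    have h1 : (0:ℝ) < 1/((n:ℝ)+1) := by positivity
    have h2 : 1/((n:ℝ)+1) ≤ 1 := by
      rw [div_le_one (by positivity)]
      simp
    rw [norm_smul, ξ.2, mul_one, Real.norm_eq_abs, abs_of_nonneg (by linarith)]
    linarith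
  set w : ℕ → Ball := fun n => ⟨(1 - 1/((n:ℝ)+1)) • ξ.1, hw n⟩ with hwdef
  have hwt : Tendsto (fun n => (w n).1) atTop (𝓝 ξ.1) := by
    have h1 : Tendsto (fun n : ℕ => 1 - 1/((n:ℝ)+1)) atTop (𝓝 1) := by
      have := tendsto_one_div_add_atTop_nhds_zero_nat (𝕜 := ℝ)
      have h2 := (tendsto_const_nhds (x := (1:ℝ)) (f := (atTop : Filter ℕ))).sub this
      simpa using h2
    have h2 := h1.smul_const ξ.1
    rw [one_smul] at h2
    exact h2
  have h1 := tendsto_hdist_sub ξ x y w hwt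
  have hwt' : Tendsto (fun n => ((g • w n : Ball)).1) atTop (𝓝 ((g • ξ : Sph)).1) :=
    smul_tendsto g w ξ hwt
  have h2 := tendsto_hdist_sub (g • ξ) (g • x) (g • y) (fun n => g • w n) hwt'
  have h3 : ∀ n, hdist ((g • x : Ball)).1 ((g • w n : Ball)).1
      - hdist ((g • y : Ball)).1 ((g • w n : Ball)).1
      = hdist x.1 (w n).1 - hdist y.1 (w n).1 := by
    intro n
    rw [hdist_smul', hdist_smul']
  exact tendsto_nhds_unique (h2.congr h3) h1

lemma tendsto_busemann_right (ξ : Sph) (x p : Ball) {ι : Type*} {l : Filter ι} (z : ι → Ball)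
    (hz : Tendsto (fun i => (z i).1) l (𝓝 p.1)) :
    Tendsto (fun i => busemann ξ x (z i)) l (𝓝 (busemann ξ x p)) := by
  have h1 : Tendsto (fun i => Real.log (‖ξ.1 - (z i).1‖ ^ 2)) l
      (𝓝 (Real.log (‖ξ.1 - p.1‖ ^ 2))) := by
    have hc : Tendsto (fun v : E3 => ‖ξ.1 - v‖ ^ 2) (𝓝 p.1) (𝓝 (‖ξ.1 - p.1‖ ^ 2)) :=
      (((continuous_const.sub continuous_id).norm).pow 2).tendsto _
    exact ((Real.continuousAt_log (pow_pos (sph_sub_norm_pos ξ p) 2).ne').tendsto).comp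
      (hc.comp hz)
  have h2 : Tendsto (fun i => Real.log (1 - ‖(z i).1‖ ^ 2)) l
      (𝓝 (Real.log (1 - ‖p.1‖ ^ 2))) := by
    have hc : Tendsto (fun v : E3 => 1 - ‖v‖ ^ 2) (𝓝 p.1) (𝓝 (1 - ‖p.1‖ ^ 2)) :=
      (continuous_const.sub (continuous_norm.pow 2)).tendsto _
    exact ((Real.continuousAt_log (one_sub_normSq_pos p).ne').tendsto).comp (hc.comp hz)
  have h := (tendsto_const_nhds (x := bsL ξ x) (f := l)).sub (h1.sub h2)
  have hval : bsL ξ x - (Real.log (‖ξ.1 - p.1‖ ^ 2) - Real.log (1 - ‖p.1‖ ^ 2))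
      = busemann ξ x p := by
    rw [busemann_eq_bsL]; unfold bsL; ring
  rw [hval] at h
  refine h.congr fun i => ?_
  rw [busemann_eq_bsL]; unfold bsL; ring

lemma tendsto_hdist_zero (p : Ball) {ι : Type*} {l : Filter ι} (z : ι → Ball)
    (hz : Tendsto (fun i => (z i).1) l (𝓝 p.1)) :
    Tendsto (fun i => hdist (z i).1 p.1) l (𝓝 0) := by
  have hppos := one_sub_normSq_pos p
  have hu : Tendsto (fun i => 1 + 2 * ‖(z i).1 - p.1‖ ^ 2
      / ((1 - ‖(z i).1‖ ^ 2) * (1 - ‖p.1‖ ^ 2))) l (𝓝 1) := by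
    have hc : Tendsto (fun v : E3 => 1 + 2 * ‖v - p.1‖ ^ 2 / ((1 - ‖v‖ ^ 2) * (1 - ‖p.1‖ ^ 2)))
        (𝓝 p.1) (𝓝 (1 + 2 * ‖p.1 - p.1‖ ^ 2 / ((1 - ‖p.1‖ ^ 2) * (1 - ‖p.1‖ ^ 2)))) := by
      refine Tendsto.add tendsto_const_nhds (Tendsto.div ?_ ?_ (mul_pos hppos hppos).ne')
      · exact (continuous_const.mul (((continuous_id.sub continuous_const).norm).pow 2)).tendsto _
      · exact ((continuous_const.sub (continuous_norm.pow 2)).mul continuous_const).tendsto _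
    have h := hc.comp hz
    simpa [Function.comp_def] using h
  have harc : Tendsto (fun w : ℝ => Real.log (w + Real.sqrt (w ^ 2 - 1))) (𝓝 1) (𝓝 0) := by
    have h1 : Tendsto (fun w : ℝ => w + Real.sqrt (w ^ 2 - 1)) (𝓝 1)
        (𝓝 (1 + Real.sqrt ((1:ℝ) ^ 2 - 1))) := by
      refine Tendsto.add (continuous_id.tendsto _) ?_
      exact (Real.continuous_sqrt.tendsto _).comp (((continuous_pow 2).sub continuous_const).tendsto _)
    have h2 : (1:ℝ) + Real.sqrt ((1:ℝ) ^ 2 - 1) = 1 := by norm_num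
    rw [h2] at h1
    have h3 := (Real.continuousAt_log one_ne_zero).tendsto.comp h1
    simpa [Function.comp_def] using h3
  have h := harc.comp hu
  refine h.congr fun i => ?_
  rfl

lemma normsq_le_of_hdist (u v : Ball) :
    ‖u.1 - v.1‖ ^ 2 ≤ (Real.exp (hdist u.1 v.1) - 1) * (1 - ‖v.1‖ ^ 2) := by
  have hA := one_sub_normSq_pos u
  have hB := one_sub_normSq_pos v
  set w : ℝ := 1 + 2 * ‖u.1 - v.1‖ ^ 2 / ((1 - ‖u.1‖ ^ 2) * (1 - ‖v.1‖ ^ 2)) with hw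
  have he : 0 ≤ 2 * ‖u.1 - v.1‖ ^ 2 / ((1 - ‖u.1‖ ^ 2) * (1 - ‖v.1‖ ^ 2)) := by positivity
  have hw1 : 1 ≤ w := by rw [hw]; linarith
  have hlog : Real.log w ≤ hdist u.1 v.1 := by
    show Real.log w ≤ arcoshR w
    unfold arcoshR
    have hs := Real.sqrt_nonneg (w ^ 2 - 1)
    exact Real.log_le_log (by linarith) (by linarith)
  have hwle : w ≤ Real.exp (hdist u.1 v.1) := by
    have h := Real.exp_le_exp.mpr hlog
    rwa [Real.exp_log (by linarith)] at h
  have hkey : 2 * ‖u.1 - v.1‖ ^ 2 = (w - 1) * ((1 - ‖u.1‖ ^ 2) * (1 - ‖v.1‖ ^ 2)) := by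
    rw [hw]
    field_simp
    ring
  have hA1 : 1 - ‖u.1‖ ^ 2 ≤ 1 := by nlinarith [sq_nonneg ‖u.1‖]
  have t1 : (w - 1) * ((1 - ‖u.1‖ ^ 2) * (1 - ‖v.1‖ ^ 2)) ≤ (w - 1) * (1 - ‖v.1‖ ^ 2) := by
    have h1 : (1 - ‖u.1‖ ^ 2) * (1 - ‖v.1‖ ^ 2) ≤ 1 - ‖v.1‖ ^ 2 := by nlinarith
    exact mul_le_mul_of_nonneg_left h1 (by linarith)
  have t2 : (w - 1) * (1 - ‖v.1‖ ^ 2) ≤ (Real.exp (hdist u.1 v.1) - 1) * (1 - ‖v.1‖ ^ 2) :=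
    mul_le_mul_of_nonneg_right (by linarith) hB.le
  have hX : 0 ≤ ‖u.1 - v.1‖ ^ 2 := sq_nonneg _
  linarith

/-- **Lemma 3.2 (Oh–Shah).**  For any Borel subset `E ⊆ S²`,
`∫_{k ∈ K/M} 𝔯_E(k⁻¹ g₀) dν_{p₀}(k X₀⁻) = ν_o(E)`, where `K/M` is identified
with `S²` via `k ↦ k(X₀⁻)` (realized through a section `κ : S² → K`). -/
theorem frakR_integral_eq_PS_measure
    (Γ : Subgroup G) (hKl : IsKleinian Γ) (hNE : NonElementary Γ)
    (hGF : GeometricallyFinite Γ)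
    (ν : Ball → Measure Sph) (hν : IsPSDensity Γ ν)
    (p₀ o : Ball) (g₀ : G) (hg₀ : g₀ • p₀ = o)
    (aOP : ℝ → G) (haHom : ∀ s t : ℝ, aOP (s + t) = aOP s * aOP t)
    (haDist : ∀ t : ℝ, hdist ((aOP t • p₀ : Ball)).1 p₀.1 = |t|)
    (X₀m : Sph)
    (hXm : Tendsto (fun s : ℝ => ((aOP (-s) • p₀ : Ball)).1) atTop (𝓝 X₀m.1))
    -- the `ANK` decomposition of `G`
    (hANK : ∀ g : G, ∃ t n k, n ∈ Ngrp aOP ∧ k ∈ Kstab p₀ ∧ g = aOP t * n * k)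
    (κ : Sph → G) (hκ : ∀ η : Sph, κ η ∈ Kstab p₀ ∧ κ η • X₀m = η)
    (Es : Set Sph) (hEmeas : MeasurableSet Es) :
    ∫⁻ η, ENNReal.ofReal (frakR Γ p₀ aOP g₀ X₀m Es ((κ η)⁻¹ * g₀)) ∂(ν p₀) =
      ν o Es := by
  classical
  -- basic facts about the one-parameter subgroup
  have haOP0 : aOP 0 = 1 := by
    have h := haHom 0 0
    rw [add_zero] at h
    have h2 : aOP 0 * 1 = aOP 0 * aOP 0 := by rw [mul_one]; exact h
    exact (mul_left_cancel h2).symm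
  have haInv : ∀ t : ℝ, (aOP t)⁻¹ = aOP (-t) := by
    intro t
    have h0 : t + -t = 0 := by ring
    have h : aOP t * aOP (-t) = 1 := by rw [← haHom, h0, haOP0]
    exact inv_eq_of_mul_eq_one_right h
  have hstab : ∀ k : G, k ∈ Kstab p₀ → k • p₀ = p₀ := fun k hk => hk
  -- `a_t` fixes `X₀m`
  have hfixA : ∀ t : ℝ, aOP t • X₀m = X₀m := by
    intro t
    have h1 := smul_tendsto (aOP t) (fun s : ℝ => (aOP (-s) • p₀ : Ball)) X₀m hXm
    have h2 : ∀ s : ℝ, (aOP t • (aOP (-s) • p₀) : Ball) = (aOP (-(s - t)) • p₀ : Ball) := by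
      intro s
      rw [← mul_smul, ← haHom]
      have h0 : t + -s = -(s - t) := by ring
      rw [h0]
    have hshift : Tendsto (fun s : ℝ => s - t) atTop atTop := by
      simpa [sub_eq_add_neg] using tendsto_atTop_add_const_right atTop (-t) (tendsto_id (α := ℝ))
    have h3 : Tendsto (fun s : ℝ => ((aOP (-(s - t)) • p₀ : Ball)).1) atTop (𝓝 X₀m.1) :=
      hXm.comp hshift
    have h1' : Tendsto (fun s : ℝ => ((aOP (-(s - t)) • p₀ : Ball)).1) atTop
        (𝓝 ((aOP t • X₀m : Sph)).1) := by
      refine h1.congr fun s => ?_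
      exact congrArg Subtype.val (h2 s)
    exact Subtype.ext (tendsto_nhds_unique h1' h3)
  -- `β_{X₀m}(p₀, a_t p₀) = -t`
  have hK : ∀ t : ℝ, busemann X₀m p₀ (aOP t • p₀) = -t := by
    intro t
    have hD := tendsto_hdist_sub X₀m p₀ (aOP t • p₀) (fun s : ℝ => (aOP (-s) • p₀ : Ball)) hXm
    have hE : ∀ᶠ s : ℝ in atTop,
        hdist p₀.1 ((aOP (-s) • p₀ : Ball)).1
          - hdist ((aOP t • p₀ : Ball)).1 ((aOP (-s) • p₀ : Ball)).1 = -t := by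
      filter_upwards [eventually_ge_atTop (0:ℝ), eventually_ge_atTop (-t)] with s hs0 hst
      have e1 : hdist p₀.1 ((aOP (-s) • p₀ : Ball)).1 = s := by
        rw [hdist_comm, haDist (-s), abs_neg, abs_of_nonneg hs0]
      have e2 : hdist ((aOP t • p₀ : Ball)).1 ((aOP (-s) • p₀ : Ball)).1 = s + t := by
        have h := hdist_smul' (aOP (-t)) (aOP t • p₀) (aOP (-s) • p₀)
        have hb1 : (aOP (-t) • (aOP t • p₀) : Ball) = p₀ := by
          rw [← mul_smul, ← haHom]
          have h0 : -t + t = 0 := by ring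
          rw [h0, haOP0, one_smul]
        have hb2 : (aOP (-t) • (aOP (-s) • p₀) : Ball) = (aOP (-(s + t)) • p₀ : Ball) := by
          rw [← mul_smul, ← haHom]
          have h0 : -t + -s = -(s + t) := by ring
          rw [h0]
        rw [hb1, hb2] at h
        rw [← h, hdist_comm, haDist (-(s + t)), abs_neg,
          abs_of_nonneg (by linarith : (0:ℝ) ≤ s + t)]
      rw [e1, e2]; ring
    have hconst : Tendsto (fun s : ℝ =>
        hdist p₀.1 ((aOP (-s) • p₀ : Ball)).1
          - hdist ((aOP t • p₀ : Ball)).1 ((aOP (-s) • p₀ : Ball)).1) atTop (𝓝 (-t)) :=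
      Tendsto.congr' (hE.mono fun s hs => hs.symm) tendsto_const_nhds
    exact tendsto_nhds_unique hD hconst
  -- group identity used below
  have hgrp : ∀ (n : G) (s : ℝ), (n • (aOP (-s) • p₀) : Ball)
      = (aOP (-s) • ((aOP s * n * aOP (-s)) • p₀) : Ball) := by
    intro n s
    rw [← mul_smul, ← mul_smul]
    congr 1
    have h1 : aOP (-s) * aOP s = 1 := by
      have h0 : -s + s = 0 := by ring
      rw [← haHom, h0, haOP0]
    rw [← mul_assoc, ← mul_assoc, h1, one_mul]
  -- `a_s n a_{-s} p₀ → p₀` for `n ∈ N`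
  have hH : ∀ n : G, n ∈ Ngrp aOP →
      Tendsto (fun s : ℝ => (((aOP s * n * aOP (-s)) • p₀ : Ball)).1) atTop (𝓝 p₀.1) := by
    intro n hn
    rw [Metric.tendsto_atTop]
    intro ε hε
    obtain ⟨T, hT⟩ := hn ε hε
    refine ⟨T, fun s hs => ?_⟩
    have h := hT s hs ⟨p₀.1, p₀.2.le⟩
    rw [dist_eq_norm]
    have hrw : (((aOP s * n * aOP (-s)) • p₀ : Ball)).1
        = (((aOP s * n * (aOP s)⁻¹) • (⟨p₀.1, p₀.2.le⟩ : ClosedBall) : ClosedBall)).1 := by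
      rw [haInv s]
      rfl
    rw [hrw]
    exact h
  have hnormto1 : Tendsto (fun s : ℝ => ‖((aOP (-s) • p₀ : Ball)).1‖) atTop (𝓝 1) := by
    have h := (continuous_norm.tendsto X₀m.1).comp hXm
    rwa [X₀m.2] at h
  -- `n` fixes `X₀m`
  have hfixN : ∀ n : G, n ∈ Ngrp aOP → n • X₀m = X₀m := by
    intro n hn
    have ht1 : Tendsto (fun s : ℝ =>
        ‖((n • (aOP (-s) • p₀) : Ball)).1 - ((aOP (-s) • p₀ : Ball)).1‖) atTop (𝓝 0) := by
      have hb : ∀ s : ℝ, ‖((n • (aOP (-s) • p₀) : Ball)).1 - ((aOP (-s) • p₀ : Ball)).1‖ ^ 2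
          ≤ (Real.exp (hdist (((aOP s * n * aOP (-s)) • p₀ : Ball)).1 p₀.1) - 1)
            * (1 - ‖((aOP (-s) • p₀ : Ball)).1‖ ^ 2) := by
        intro s
        have h := normsq_le_of_hdist (n • (aOP (-s) • p₀) : Ball) (aOP (-s) • p₀ : Ball)
        have heq : hdist ((n • (aOP (-s) • p₀) : Ball)).1 ((aOP (-s) • p₀ : Ball)).1
            = hdist (((aOP s * n * aOP (-s)) • p₀ : Ball)).1 p₀.1 := by
          rw [hgrp n s]
          exact hdist_smul' (aOP (-s)) _ _
        rwa [heq] at h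
      have he : Tendsto (fun s : ℝ =>
          Real.exp (hdist (((aOP s * n * aOP (-s)) • p₀ : Ball)).1 p₀.1) - 1) atTop (𝓝 0) := by
        have h := (Real.continuous_exp.tendsto 0).comp
          (tendsto_hdist_zero p₀ (fun s : ℝ => ((aOP s * n * aOP (-s)) • p₀ : Ball)) (hH n hn))
        have h2 := h.sub (tendsto_const_nhds (x := (1:ℝ)) (f := (atTop : Filter ℝ)))
        simpa using h2
      have hb2 : Tendsto (fun s : ℝ => 1 - ‖((aOP (-s) • p₀ : Ball)).1‖ ^ 2) atTop (𝓝 0) := by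
        have h := (tendsto_const_nhds (x := (1:ℝ)) (f := (atTop : Filter ℝ))).sub (hnormto1.pow 2)
        simpa using h
      have hlim : Tendsto (fun s : ℝ =>
          (Real.exp (hdist (((aOP s * n * aOP (-s)) • p₀ : Ball)).1 p₀.1) - 1)
            * (1 - ‖((aOP (-s) • p₀ : Ball)).1‖ ^ 2)) atTop (𝓝 0) := by
        have h := he.mul hb2
        simpa using h
      have hsq : Tendsto (fun s : ℝ =>
          ‖((n • (aOP (-s) • p₀) : Ball)).1 - ((aOP (-s) • p₀ : Ball)).1‖ ^ 2) atTop (𝓝 0) :=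
        squeeze_zero (fun s => sq_nonneg _) hb hlim
      have h := (Real.continuous_sqrt.tendsto 0).comp hsq
      rw [Real.sqrt_zero] at h
      refine h.congr fun s => ?_
      exact Real.sqrt_sq (norm_nonneg _)
    have ht2 : Tendsto (fun s : ℝ => ((n • (aOP (-s) • p₀) : Ball)).1) atTop (𝓝 X₀m.1) := by
      rw [tendsto_iff_dist_tendsto_zero]
      have hd1 : Tendsto (fun s : ℝ => dist ((aOP (-s) • p₀ : Ball)).1 X₀m.1) atTop (𝓝 0) :=
        tendsto_iff_dist_tendsto_zero.mp hXm
      refine squeeze_zero (fun s => dist_nonneg) (fun s => ?_) (by simpa using ht1.add hd1)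
      calc dist ((n • (aOP (-s) • p₀) : Ball)).1 X₀m.1
          ≤ dist ((n • (aOP (-s) • p₀) : Ball)).1 ((aOP (-s) • p₀ : Ball)).1
            + dist ((aOP (-s) • p₀ : Ball)).1 X₀m.1 := dist_triangle _ _ _
        _ = ‖((n • (aOP (-s) • p₀) : Ball)).1 - ((aOP (-s) • p₀ : Ball)).1‖
            + dist ((aOP (-s) • p₀ : Ball)).1 X₀m.1 := by rw [dist_eq_norm]
    have ht3 := smul_tendsto n (fun s : ℝ => (aOP (-s) • p₀ : Ball)) X₀m hXm
    exact Subtype.ext (tendsto_nhds_unique ht3 ht2)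
  -- `β_{X₀m}(p₀, n p₀) = 0`
  have hJ : ∀ n : G, n ∈ Ngrp aOP → busemann X₀m p₀ (n • p₀) = 0 := by
    intro n hn
    have hlim : Tendsto (fun s : ℝ =>
        busemann X₀m p₀ ((aOP s * n * aOP (-s)) • p₀ : Ball)) atTop (𝓝 0) := by
      have h := tendsto_busemann_right X₀m p₀ p₀
        (fun s : ℝ => ((aOP s * n * aOP (-s)) • p₀ : Ball)) (hH n hn)
      rwa [busemann_self] at h
    have hconst : ∀ s : ℝ,
        busemann X₀m p₀ ((aOP s * n * aOP (-s)) • p₀ : Ball) = busemann X₀m p₀ (n • p₀) := by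
      intro s
      have hstep2 : busemann X₀m p₀ ((aOP s * n * aOP (-s)) • p₀ : Ball)
          = busemann X₀m (aOP (-s) • p₀) (n • (aOP (-s) • p₀)) := by
        have h := busemann_smul (aOP (-s)) X₀m p₀ ((aOP s * n * aOP (-s)) • p₀ : Ball)
        rw [hfixA (-s)] at h
        rw [hgrp n s]
        exact h.symm
      have hA := busemann_smul n X₀m p₀ (aOP (-s) • p₀)
      rw [hfixN n hn] at hA
      rw [hstep2, busemann_eq_bsL, busemann_eq_bsL]
      rw [busemann_eq_bsL, busemann_eq_bsL] at hA
      linarith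
    exact tendsto_nhds_unique tendsto_const_nhds (hlim.congr hconst)
  -- evaluation of the defining set of `frakR`
  have hdeceval : ∀ g : G, ∀ t : ℝ, ∀ n k : G, n ∈ Ngrp aOP → k ∈ Kstab p₀ →
      g = aOP t * n * k →
      (if k⁻¹ • X₀m ∈ g₀⁻¹ • Es then Real.exp (-(critExp Γ) * t) else 0)
        = (if g⁻¹ • X₀m ∈ g₀⁻¹ • Es then
            Real.exp (-(critExp Γ) * busemann X₀m ((g • p₀ : Ball)) p₀) else 0) := by
    intro g t n k hn hk hg
    have hkp : k • p₀ = p₀ := hstab k hk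
    have hgp : (g • p₀ : Ball) = (aOP t • (n • p₀) : Ball) := by
      rw [hg, mul_smul, mul_smul, hkp]
    have hb2 : busemann X₀m (aOP t • p₀) (aOP t • (n • p₀)) = 0 := by
      have h := busemann_smul (aOP t) X₀m p₀ (n • p₀)
      rw [hfixA t] at h
      rw [h]
      exact hJ n hn
    have ht : busemann X₀m ((g • p₀ : Ball)) p₀ = t := by
      have hc := busemann_cocycle X₀m p₀ (aOP t • p₀) (aOP t • (n • p₀))
      rw [hK t, hb2] at hc
      rw [busemann_antisymm X₀m ((g • p₀ : Ball)) p₀, hgp, hc]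
      ring
    have hkX : k⁻¹ • X₀m = g⁻¹ • X₀m := by
      have hgk : k⁻¹ = g⁻¹ * aOP t * n := by
        rw [hg]; group
      rw [hgk, mul_smul, mul_smul, hfixN n hn, hfixA t]
    rw [hkX, ht]
  -- closed form of `frakR`
  have hfrakR : ∀ g : G, frakR Γ p₀ aOP g₀ X₀m Es g
      = (if g⁻¹ • X₀m ∈ g₀⁻¹ • Es then
          Real.exp (-(critExp Γ) * busemann X₀m ((g • p₀ : Ball)) p₀) else 0) := by
    intro g
    have hset : {r : ℝ | ∃ t n k, n ∈ Ngrp aOP ∧ k ∈ Kstab p₀ ∧ g = aOP t * n * k ∧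
        r = if k⁻¹ • X₀m ∈ g₀⁻¹ • Es then Real.exp (-(critExp Γ) * t) else 0}
        = {(if g⁻¹ • X₀m ∈ g₀⁻¹ • Es then
            Real.exp (-(critExp Γ) * busemann X₀m ((g • p₀ : Ball)) p₀) else 0)} := by
      ext r
      simp only [Set.mem_setOf_eq, Set.mem_singleton_iff]
      constructor
      · rintro ⟨t, n, k, hn, hk, hg, rfl⟩
        exact hdeceval g t n k hn hk hg
      · rintro rfl
        obtain ⟨t, n, k, hn, hk, hg⟩ := hANK g
        exact ⟨t, n, k, hn, hk, hg, (hdeceval g t n k hn hk hg).symm⟩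
    show sSup _ = _
    rw [hset, csSup_singleton]
  -- pointwise value of the integrand
  have hmain : ∀ η : Sph, frakR Γ p₀ aOP g₀ X₀m Es ((κ η)⁻¹ * g₀)
      = if η ∈ Es then Real.exp (-(critExp Γ) * busemann η o p₀) else 0 := by
    intro η
    rw [hfrakR]
    have hginv : ((κ η)⁻¹ * g₀)⁻¹ • X₀m = g₀⁻¹ • η := by
      rw [mul_inv_rev, inv_inv, mul_smul, (hκ η).2]
    have hcond : (((κ η)⁻¹ * g₀)⁻¹ • X₀m ∈ g₀⁻¹ • Es) ↔ (η ∈ Es) := by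
      rw [hginv]
      exact Set.smul_mem_smul_set_iff
    have hbus : busemann X₀m (((((κ η)⁻¹ * g₀) • p₀ : Ball))) p₀ = busemann η o p₀ := by
      have hgp : (((κ η)⁻¹ * g₀) • p₀ : Ball) = ((κ η)⁻¹ • o : Ball) := by
        rw [mul_smul, hg₀]
      have h := busemann_smul (κ η) X₀m p₀ ((κ η)⁻¹ • o)
      rw [(hκ η).2, hstab (κ η) (hκ η).1, smul_inv_smul] at h
      rw [hgp, busemann_antisymm X₀m ((κ η)⁻¹ • o : Ball) p₀, ← h,
        ← busemann_antisymm η o p₀]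
    simp only [hbus]
    simp only [hcond]
  -- conclusion
  calc ∫⁻ η, ENNReal.ofReal (frakR Γ p₀ aOP g₀ X₀m Es ((κ η)⁻¹ * g₀)) ∂(ν p₀)
      = ∫⁻ η, Es.indicator
          (fun η => ENNReal.ofReal (Real.exp (-(critExp Γ) * busemann η o p₀))) η ∂(ν p₀) := by
        refine lintegral_congr fun η => ?_
        rw [hmain η, Set.indicator_apply]
        split_ifs with h
        · rfl
        · exact ENNReal.ofReal_zero
    _ = ∫⁻ η in Es, ENNReal.ofReal (Real.exp (-(critExp Γ) * busemann η o p₀)) ∂(ν p₀) :=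
        lintegral_indicator hEmeas _
    _ = ν o Es := by
        rw [hν.2.2.2.2 p₀ o, withDensity_apply _ hEmeas]

end CirclesOnSphere
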